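/- arXiv:2211.05574 — 2 statements merged into one kernel-verified Lean document; each statement's English description precedes it below -/
import Mathlib

section
/- Let G = (V,E) be a finite simple graph with a 1-critical bifiltration given by crit : E → ℝ², let e = {a,b} be an edge of G, and let v be a vertex distinct from a and b. Then e is strongly filtration-dominated by v if and only if the following two conditions hold: (i) {a,v} ∈ E and {b,v} ∈ E with crit({a,v}) ≤ crit(e) and crit({b,v}) ≤ crit(e); and (ii) for every edge neighbor w of e in G with w ≠ v, {v,w} ∈ E and crit({v,w}) ≤ crit_e(w). -/
/-- The subgraph of `G` at grade `c` in a 1-critical bifiltration: it keeps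
exactly the edges whose critical grade is `≤ c` (componentwise order on `ℝ²`). -/
def gradedSubgraph {V : Type*} (G : SimpleGraph V) (crit : Sym2 V → ℝ × ℝ)
    (c : ℝ × ℝ) : SimpleGraph V where
  Adj u v := G.Adj u v ∧ crit s(u, v) ≤ c
  symm := by
    refine ⟨fun u v h => ?_⟩
    refine ⟨h.1.symm, ?_⟩
    rw [Sym2.eq_swap]
    exact h.2
  loopless := ⟨fun u h => G.loopless.irrefl u h.1⟩

/-- `w` is an edge neighbor of the edge `{a,b}` in `H`: it is adjacent to both endpoints. -/
def edgeNbr {V : Type*} (H : SimpleGraph V) (a b w : V) : Prop :=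
  H.Adj a w ∧ H.Adj b w

/-- The edge `{a,b}` is dominated by `v` in `H`. -/
def dominatedBy {V : Type*} (H : SimpleGraph V) (a b v : V) : Prop :=
  edgeNbr H a b v ∧ ∀ w, edgeNbr H a b w → w ≠ v → H.Adj v w

/-- The edge `{a,b}` is dominated in `H` (by some vertex). -/
def dominated {V : Type*} (H : SimpleGraph V) (a b : V) : Prop :=
  ∃ v, dominatedBy H a b v

/-- `crit_e(w) = crit(e) ∗ crit({a,w}) ∗ crit({b,w})`, the grade at which `w`
becomes an edge neighbor of `e = {a,b}`. -/
def critE {V : Type*} (crit : Sym2 V → ℝ × ℝ) (a b w : V) : ℝ × ℝ :=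
  crit s(a, b) ⊔ crit s(a, w) ⊔ crit s(b, w)

/-- The set `C = {crit(e)} ∪ {crit_e(w₁) ∗ crit_e(w₂) : w₁, w₂ ∈ N_G(e)}`. -/
def critJoins {V : Type*} (G : SimpleGraph V) (crit : Sym2 V → ℝ × ℝ)
    (a b : V) : Set (ℝ × ℝ) :=
  {crit s(a, b)} ∪
    {x | ∃ w₁ w₂, edgeNbr G a b w₁ ∧ edgeNbr G a b w₂ ∧
      x = critE crit a b w₁ ⊔ critE crit a b w₂}

/-- `Δ(p,q) = {r : p ≤ r ∧ ¬ q ≤ r}`. -/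
def Delta (p q : ℝ × ℝ) : Set (ℝ × ℝ) := {r | p ≤ r ∧ ¬ q ≤ r}

/-- characterization of strong filtration-domination.
`e = {a,b}` is strongly filtration-dominated by `v` iff (i) `v` is a potential
strong dominator, and (ii) every other edge neighbor `w` of `e` satisfies
`{v,w} ∈ E` with `crit({v,w}) ≤ crit_e(w)`. -/
theorem stronglyFiltrationDominatedBy_iff
    {V : Type*} [Fintype V] (G : SimpleGraph V) (crit : Sym2 V → ℝ × ℝ)
    (a b v : V) (hab : G.Adj a b) (hva : v ≠ a) (hvb : v ≠ b) :
    (∀ c : ℝ × ℝ, crit s(a, b) ≤ c → dominatedBy (gradedSubgraph G crit c) a b v) ↔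
      ((G.Adj a v ∧ G.Adj b v ∧
          crit s(a, v) ≤ crit s(a, b) ∧ crit s(b, v) ≤ crit s(a, b)) ∧
        ∀ w, edgeNbr G a b w → w ≠ v →
          G.Adj v w ∧ crit s(v, w) ≤ critE crit a b w) := by
  constructor
  · intro h
    constructor
    · obtain ⟨⟨ha, hb⟩, _⟩ := h (crit s(a, b)) le_rfl
      exact ⟨ha.1, hb.1, ha.2, hb.2⟩
    · intro w hw hwv
      have hc : crit s(a, b) ≤ critE crit a b w := le_sup_of_le_left le_sup_left
      obtain ⟨_, hdom⟩ := h (critE crit a b w) hc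
      have hw' : edgeNbr (gradedSubgraph G crit (critE crit a b w)) a b w :=
        ⟨⟨hw.1, le_sup_of_le_left le_sup_right⟩, ⟨hw.2, le_sup_right⟩⟩
      exact hdom w hw' hwv
  · rintro ⟨⟨hav, hbv, hcav, hcbv⟩, h2⟩ c hc
    refine ⟨⟨⟨hav, hcav.trans hc⟩, ⟨hbv, hcbv.trans hc⟩⟩, ?_⟩
    rintro w ⟨⟨haw, hcaw⟩, ⟨hbw, hcbw⟩⟩ hwv
    obtain ⟨hvw, hcvw⟩ := h2 w ⟨haw, hbw⟩ hwv
    exact ⟨hvw, hcvw.trans (sup_le (sup_le hc hcaw) hcbw)⟩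
end

section
/- Let G = (V,E) be a finite simple graph with a 1-critical bifiltration given by crit : E → ℝ², let e = {a,b} be an edge of G, and let v be an edge neighbor of e in G (so {a,v}, {b,v} ∈ E). Then the set of grades r ∈ ℝ² such that crit(e) ≤ r and e is NOT dominated by v in G_r equals Δ(crit(e), crit({a,v}) ∗ crit({b,v})) ∪ ⋃_w R_w, where the union runs over all edge neighbors w of e in G with w ≠ v, and R_w := Δ(crit_e(w), crit({v,w})) if {v,w} ∈ E, while R_w := {r ∈ ℝ² : crit_e(w) ≤ r} if {v,w} ∉ E. -/
open scoped Classical in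
/-- region of non-domination. The set of grades at which
`e = {a,b}` is present but not dominated by `v` is the union of the
`Δ`-regions. -/
theorem region_of_non_domination
    {V : Type*} [Fintype V] (G : SimpleGraph V) (crit : Sym2 V → ℝ × ℝ)
    (a b v : V) (hab : G.Adj a b) (hv : edgeNbr G a b v) :
    {r : ℝ × ℝ | crit s(a, b) ≤ r ∧ ¬ dominatedBy (gradedSubgraph G crit r) a b v} =
      Delta (crit s(a, b)) (crit s(a, v) ⊔ crit s(b, v)) ∪
        ⋃ w ∈ {w | edgeNbr G a b w ∧ w ≠ v},
          (if G.Adj v w then Delta (critE crit a b w) (crit s(v, w))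
            else {r : ℝ × ℝ | critE crit a b w ≤ r}) := by
  ext r
  simp only [Set.mem_setOf_eq, Set.mem_union, Set.mem_iUnion, Delta, exists_prop]
  constructor
  · rintro ⟨hr, hnd⟩
    by_cases hcv : crit s(a, v) ⊔ crit s(b, v) ≤ r
    · -- v is an edge neighbor at grade r; failure must come from a witness w
      have hvH : edgeNbr (gradedSubgraph G crit r) a b v :=
        ⟨⟨hv.1, le_trans le_sup_left hcv⟩, ⟨hv.2, le_trans le_sup_right hcv⟩⟩
      rw [dominatedBy, not_and] at hnd
      have := hnd hvH
      push_neg at this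
      obtain ⟨w, hwH, hwv, hvw⟩ := this
      right
      refine ⟨w, ⟨⟨hwH.1.1, hwH.2.1⟩, hwv⟩, ?_⟩
      have hce : critE crit a b w ≤ r := sup_le (sup_le hr hwH.1.2) hwH.2.2
      by_cases hadj : G.Adj v w
      · rw [if_pos hadj]
        refine ⟨hce, fun hle => hvw ⟨hadj, hle⟩⟩
      · rw [if_neg hadj]
        exact hce
    · exact Or.inl ⟨hr, hcv⟩
  · rintro (⟨hr, hn⟩ | ⟨w, ⟨hwG, hwv⟩, hmem⟩)
    · refine ⟨hr, fun hd => hn ?_⟩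
      exact sup_le hd.1.1.2 hd.1.2.2
    · have hce : critE crit a b w ≤ r := by
        by_cases hadj : G.Adj v w
        · rw [if_pos hadj] at hmem; exact hmem.1
        · rw [if_neg hadj] at hmem; exact hmem
      have hr : crit s(a, b) ≤ r := le_trans (le_trans le_sup_left le_sup_left) hce
      refine ⟨hr, fun hd => ?_⟩
      have hwH : edgeNbr (gradedSubgraph G crit r) a b w :=
        ⟨⟨hwG.1, le_trans (le_trans le_sup_right le_sup_left) hce⟩,
         ⟨hwG.2, le_trans le_sup_right hce⟩⟩
      have hadjH := hd.2 w hwH hwv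
      by_cases hadj : G.Adj v w
      · rw [if_pos hadj] at hmem
        exact hmem.2 hadjH.2
      · exact hadj hadjH.1
end
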